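/- Let n ≥ 2 and let B be the open unit ball of ℝⁿ. For all a, x, y ∈ B one has (1 − ρ(x,y))/(1 + ρ(x,y)) ≤ [x,a]/[y,a] ≤ (1 + ρ(x,y))/(1 − ρ(x,y)). -/

import Mathlib

open MeasureTheory Filter Set
open scoped ENNReal NNReal Topology

noncomputable section

/-- Euclidean space ℝⁿ. -/
abbrev E (n : ℕ) := EuclideanSpace ℝ (Fin n)

/-- The open unit ball of ℝⁿ. -/
def Bset (n : ℕ) : Set (E n) := Metric.ball 0 1

/-- The bracket `[x,y] = √(1 − 2 x·y + |x|²|y|²)`. -/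
def br {n : ℕ} (x y : E n) : ℝ := Real.sqrt (1 - 2 * (inner ℝ x y : ℝ) + ‖x‖ ^ 2 * ‖y‖ ^ 2)

/-- The pseudohyperbolic distance `ρ(x,y) = |x − y|/[x,y]`. -/
def pd {n : ℕ} (x y : E n) : ℝ := ‖x - y‖ / br x y

/-- The pseudohyperbolic ball `E_δ(x) = {y ∈ B : ρ(x,y) < δ}`. -/
def Eball {n : ℕ} (δ : ℝ) (x : E n) : Set (E n) := {y | y ∈ Bset n ∧ pd x y < δ}

/-- Lebesgue volume measure on ℝⁿ normalized so that `ν(B) = 1`. -/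
def nu (n : ℕ) : Measure (E n) := (volume (Bset n))⁻¹ • volume

lemma br_expr_nonneg {n : ℕ} (x y : E n) (h : ‖x‖ * ‖y‖ ≤ 1) :
    0 ≤ 1 - 2 * (inner ℝ x y : ℝ) + ‖x‖ ^ 2 * ‖y‖ ^ 2 := by
  have h1 : (inner ℝ x y : ℝ) ≤ ‖x‖ * ‖y‖ := real_inner_le_norm x y
  nlinarith [sq_nonneg (1 - ‖x‖ * ‖y‖)]

lemma br_sq {n : ℕ} (x y : E n) (h : ‖x‖ * ‖y‖ ≤ 1) :
    (br x y) ^ 2 = 1 - 2 * (inner ℝ x y : ℝ) + ‖x‖ ^ 2 * ‖y‖ ^ 2 :=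
  Real.sq_sqrt (br_expr_nonneg x y h)

lemma br_nonneg {n : ℕ} (x y : E n) : 0 ≤ br x y := Real.sqrt_nonneg _

lemma br_ge {n : ℕ} (x y : E n) (h : ‖x‖ * ‖y‖ ≤ 1) : 1 - ‖x‖ * ‖y‖ ≤ br x y := by
  have h1 : (inner ℝ x y : ℝ) ≤ ‖x‖ * ‖y‖ := real_inner_le_norm x y
  have h2 : (1 - ‖x‖ * ‖y‖) ^ 2 ≤ 1 - 2 * (inner ℝ x y : ℝ) + ‖x‖ ^ 2 * ‖y‖ ^ 2 := by nlinarith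
  have h3 := Real.sqrt_le_sqrt h2
  rw [Real.sqrt_sq_eq_abs] at h3
  calc 1 - ‖x‖ * ‖y‖ ≤ |1 - ‖x‖ * ‖y‖| := le_abs_self _
    _ ≤ br x y := h3

lemma br_comm {n : ℕ} (x y : E n) : br x y = br y x := by
  unfold br; rw [real_inner_comm]; ring_nf

lemma br_sq_eq {n : ℕ} (x y : E n) (h : ‖x‖ * ‖y‖ ≤ 1) :
    (br x y) ^ 2 = ‖x - y‖ ^ 2 + (1 - ‖x‖ ^ 2) * (1 - ‖y‖ ^ 2) := by
  rw [br_sq x y h, norm_sub_sq_real]; ring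

lemma br_lip {n : ℕ} (x y a : E n) (ha : ‖a‖ ≤ 1) : |br x a - br y a| ≤ ‖x - y‖ := by
  rcases eq_or_ne a 0 with rfl | h0
  · simp [br]
  · have hc : (0:ℝ) < ‖a‖ := norm_pos_iff.2 h0
    have key : ∀ z : E n, br z a = ‖‖a‖ • z - ‖a‖⁻¹ • a‖ := by
      intro z
      have h1 : ‖‖a‖ • z - ‖a‖⁻¹ • a‖ ^ 2 = 1 - 2 * (inner ℝ z a : ℝ) + ‖z‖ ^ 2 * ‖a‖ ^ 2 := by
        rw [norm_sub_sq_real, real_inner_smul_left, real_inner_smul_right, norm_smul, norm_smul]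
        simp [Real.norm_eq_abs, abs_of_pos hc, abs_of_pos (inv_pos.2 hc)]
        field_simp
        ring
      rw [br, ← h1, Real.sqrt_sq (norm_nonneg _)]
    rw [key x, key y]
    calc |‖‖a‖ • x - ‖a‖⁻¹ • a‖ - ‖‖a‖ • y - ‖a‖⁻¹ • a‖| ≤ ‖(‖a‖ • x - ‖a‖⁻¹ • a) - (‖a‖ • y - ‖a‖⁻¹ • a)‖ := abs_norm_sub_norm_le _ _
      _ = ‖‖a‖ • (x - y)‖ := by rw [smul_sub]; congr 1; abel
      _ = ‖a‖ * ‖x - y‖ := by rw [norm_smul, Real.norm_eq_abs, abs_of_pos hc]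
      _ ≤ ‖x - y‖ := by nlinarith [norm_nonneg (x - y)]

lemma br_key {n : ℕ} (x y a : E n) (hx : ‖x‖ < 1) (hy : ‖y‖ < 1) (ha : ‖a‖ < 1) :
    br x y ≤ ‖x - y‖ + 2 * br y a := by
  set s := ‖x‖ with hs
  set r := ‖y‖ with hr
  have hs0 : 0 ≤ s := norm_nonneg x
  have hr0 : 0 ≤ r := norm_nonneg y
  have hsr : s * r ≤ 1 := by nlinarith
  have hra : r * ‖a‖ ≤ 1 := by nlinarith [norm_nonneg a]
  set K := br x y with hK
  set d := ‖x - y‖ with hd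
  have hK0 : 0 ≤ K := br_nonneg x y
  have hd0 : 0 ≤ d := norm_nonneg _
  have hKsq : K ^ 2 = d ^ 2 + (1 - s ^ 2) * (1 - r ^ 2) := br_sq_eq x y hsr
  have hKge : 1 - s * r ≤ K := br_ge x y hsr
  have hdge1 : s - r ≤ d := by
    have := abs_norm_sub_norm_le x y
    rw [abs_le] at this; linarith [this.2]
  have hdge2 : r - s ≤ d := by
    have := abs_norm_sub_norm_le x y
    rw [abs_le] at this; linarith [this.1]
  -- scalar step : (1-s^2)(1+r) ≤ 2(K+d)
  have hscalar : (1 - s ^ 2) * (1 + r) ≤ 2 * (K + d) := by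
    rcases le_total s r with h | h
    · nlinarith [mul_nonneg (mul_nonneg (sq_nonneg (1 - s)) (by linarith : (0:ℝ) ≤ 1 + r)) (le_refl (0:ℝ)),
        sq_nonneg (1 - s), mul_nonneg (sq_nonneg (1 - s)) hr0]
    · nlinarith [mul_nonneg (sub_nonneg.2 h) (by nlinarith : (0:ℝ) ≤ 3 + 2*s - s^2),
        mul_nonneg (by linarith : (0:ℝ) ≤ 1 - s) (by nlinarith : (0:ℝ) ≤ 1 - s^2)]
  -- K - d ≤ 2 (1 - r)
  have hKd : K - d ≤ 2 * (1 - r) := by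
    have hKdpos : 0 < K + d := by nlinarith
    have h1 : (K - d) * (K + d) ≤ (2 * (1 - r)) * (K + d) := by
      have h2 : (K - d) * (K + d) = (1 - s ^ 2) * (1 - r ^ 2) := by nlinarith
      have h3 : (1 - s ^ 2) * (1 - r ^ 2) ≤ 2 * (1 - r) * (K + d) := by
        nlinarith [mul_le_mul_of_nonneg_left hscalar (by linarith : (0:ℝ) ≤ 1 - r)]
      linarith
    exact le_of_mul_le_mul_right h1 hKdpos
  have hba : 1 - r * ‖a‖ ≤ br y a := br_ge y a hra
  have : 1 - r ≤ br y a := by nlinarith [norm_nonneg a]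
  linarith

lemma ratio_bound {n : ℕ} (a x y : E n) (hx : ‖x‖ < 1) (hy : ‖y‖ < 1) (ha : ‖a‖ < 1) :
    br x a / br y a ≤ (1 + ‖x - y‖ / br x y) / (1 - ‖x - y‖ / br x y) := by
  have hs0 : 0 ≤ ‖x‖ := norm_nonneg x
  have hr0 : 0 ≤ ‖y‖ := norm_nonneg y
  have hsr : ‖x‖ * ‖y‖ ≤ 1 := by nlinarith
  have hxa : ‖x‖ * ‖a‖ ≤ 1 := by nlinarith [norm_nonneg a]
  have hya : ‖y‖ * ‖a‖ ≤ 1 := by nlinarith [norm_nonneg a]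
  set K := br x y with hKdef
  set d := ‖x - y‖ with hddef
  set B1 := br x a with hB1def
  set B2 := br y a with hB2def
  have hK : 0 < K := by have := br_ge x y hsr; nlinarith
  have hB2 : 0 < B2 := by have := br_ge y a hya; nlinarith [norm_nonneg a, norm_nonneg y]
  have hB1 : 0 ≤ B1 := br_nonneg x a
  have hd0 : 0 ≤ d := norm_nonneg _
  have hdK : d < K := by
    have h1 : K ^ 2 = d ^ 2 + (1 - ‖x‖ ^ 2) * (1 - ‖y‖ ^ 2) := br_sq_eq x y hsr
    nlinarith [mul_pos (by nlinarith : (0:ℝ) < 1 - ‖x‖ ^ 2) (by nlinarith : (0:ℝ) < 1 - ‖y‖ ^ 2)]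
  have hrpos : 0 < 1 - d / K := by
    rw [sub_pos, div_lt_one hK]; exact hdK
  have hlip : B1 - B2 ≤ d := by
    have := br_lip x y a ha.le
    rw [abs_le] at this; linarith [this.2]
  have hkey : K ≤ d + 2 * B2 := br_key x y a hx hy ha
  -- main polynomial inequality
  have hmain : B1 * (K - d) ≤ (K + d) * B2 := by
    rcases le_total B1 B2 with h | h
    · nlinarith
    · nlinarith [mul_le_mul_of_nonneg_right hkey (by linarith : (0:ℝ) ≤ B1 - B2),
        mul_nonneg hB2.le (by linarith : (0:ℝ) ≤ d - (B1 - B2))]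
  rw [div_le_div_iff₀ hB2 hrpos]
  have e1 : B1 * (1 - d / K) = B1 * (K - d) / K := by field_simp
  have e2 : (1 + d / K) * B2 = (K + d) * B2 / K := by field_simp
  rw [e1, e2]
  exact div_le_div_of_nonneg_right hmain hK.le


/-- For all `a, x, y ∈ B`,
`(1 − ρ(x,y))/(1 + ρ(x,y)) ≤ [x,a]/[y,a] ≤ (1 + ρ(x,y))/(1 − ρ(x,y))`. -/
theorem stmt0 (n : ℕ) (hn : 2 ≤ n) (a x y : E n)
    (ha : a ∈ Bset n) (hx : x ∈ Bset n) (hy : y ∈ Bset n) :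
    (1 - pd x y) / (1 + pd x y) ≤ br x a / br y a ∧
      br x a / br y a ≤ (1 + pd x y) / (1 - pd x y) := by
  rw [Bset, mem_ball_zero_iff] at ha hx hy
  have hsr : ‖x‖ * ‖y‖ ≤ 1 := by nlinarith [norm_nonneg x, norm_nonneg y]
  have hxa : ‖x‖ * ‖a‖ ≤ 1 := by nlinarith [norm_nonneg x, norm_nonneg a]
  have hya : ‖y‖ * ‖a‖ ≤ 1 := by nlinarith [norm_nonneg y, norm_nonneg a]
  have hK : 0 < br x y := by have := br_ge x y hsr; nlinarith [norm_nonneg x, norm_nonneg y]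
  have hB1 : 0 < br x a := by have := br_ge x a hxa; nlinarith [norm_nonneg x, norm_nonneg a]
  have hB2 : 0 < br y a := by have := br_ge y a hya; nlinarith [norm_nonneg y, norm_nonneg a]
  have hdK : ‖x - y‖ < br x y := by
    have h1 : (br x y) ^ 2 = ‖x - y‖ ^ 2 + (1 - ‖x‖ ^ 2) * (1 - ‖y‖ ^ 2) := br_sq_eq x y hsr
    nlinarith [mul_pos (by nlinarith [norm_nonneg x] : (0:ℝ) < 1 - ‖x‖ ^ 2) (by nlinarith [norm_nonneg y] : (0:ℝ) < 1 - ‖y‖ ^ 2),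
      norm_nonneg (x - y)]
  have hrho0 : 0 ≤ pd x y := div_nonneg (norm_nonneg _) hK.le
  have hrpos : 0 < 1 - pd x y := by
    rw [sub_pos, pd, div_lt_one hK]; exact hdK
  have hupper : br x a / br y a ≤ (1 + pd x y) / (1 - pd x y) := by
    have := ratio_bound a x y hx hy ha
    rwa [pd]
  refine ⟨?_, hupper⟩
  have hlow : br y a / br x a ≤ (1 + pd x y) / (1 - pd x y) := by
    have h := ratio_bound a y x hy hx ha
    rw [norm_sub_rev y x, br_comm y x] at h
    rwa [pd]
  rw [div_le_div_iff₀ hB1 hrpos] at hlow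
  rw [div_le_div_iff₀ (by linarith : (0:ℝ) < 1 + pd x y) hB2]
  nlinarith
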